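/- arXiv:1609.00665 — 3 statements merged into one kernel-verified Lean document; each statement's English description precedes it below -/
import Mathlib

section
/- For each n ≥ 1 and V ∈ ℝ with V² ≠ n, the two vectors Φₙ⁽±⁾ = (eₙ, αₙ⁽±⁾ eₙ₋₁) in ℂ² ⊗ ℓ² (unnormalized), where αₙ⁽±⁾ = ∓i(√(n−V²) ∓ iV)/√n, are eigenvectors of the operator H(V) = [[iV, iA†],[−iA, −iV]] with eigenvalues ±√(n−V²), and they are linearly independent. -/
open Complex

/-- The annihilation operator on sequences: (A c) n = √(n+1) · c (n+1). -/
noncomputable def annOp (c : ℕ → ℂ) : ℕ → ℂ :=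
  fun n => (Real.sqrt (n + 1) : ℂ) * c (n + 1)

/-- The creation operator on sequences: (A† c) n = √n · c (n−1), (A† c) 0 = 0. -/
noncomputable def creOp (c : ℕ → ℂ) : ℕ → ℂ :=
  fun n => if n = 0 then 0 else (Real.sqrt n : ℂ) * c (n - 1)

/-- The operator H(V) = [[iV, iA†],[−iA, −iV]] on ℓ² ⊕ ℓ² (units 2v_F/ξ = 1). -/
noncomputable def Hgraphene (V : ℝ) (f : (ℕ → ℂ) × (ℕ → ℂ)) : (ℕ → ℂ) × (ℕ → ℂ) :=
  (fun m => Complex.I * V * f.1 m + Complex.I * creOp f.2 m,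
   fun m => -Complex.I * annOp f.1 m - Complex.I * V * f.2 m)

/-- The basis vector e n. -/
noncomputable def eVec (n : ℕ) : ℕ → ℂ := fun m => if m = n then 1 else 0

/-- Principal square root √(n − V²). -/
noncomputable def sqVal (n : ℕ) (V : ℝ) : ℂ := ((n : ℂ) - (V : ℂ) ^ 2) ^ ((1 : ℂ) / 2)

noncomputable def alphaP (n : ℕ) (V : ℝ) : ℂ :=
  -Complex.I * (sqVal n V - Complex.I * V) / (Real.sqrt n : ℂ)

noncomputable def alphaM (n : ℕ) (V : ℝ) : ℂ :=
  Complex.I * (sqVal n V + Complex.I * V) / (Real.sqrt n : ℂ)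

lemma sqVal_sq (n : ℕ) (V : ℝ) (hV : V ^ 2 ≠ (n : ℝ)) :
    sqVal n V * sqVal n V = (n : ℂ) - (V : ℂ) ^ 2 := by
  have hz : (n : ℂ) - (V : ℂ) ^ 2 ≠ 0 := by
    intro h
    apply hV
    have := sub_eq_zero.mp h
    exact_mod_cast this.symm
  have h2 : ((1 : ℂ) / 2) = ((2 : ℕ) : ℂ)⁻¹ := by norm_num
  have := Complex.cpow_nat_inv_pow ((n : ℂ) - (V : ℂ) ^ 2) (n := 2) (by norm_num)
  calc sqVal n V * sqVal n V = (((n : ℂ) - (V : ℂ) ^ 2) ^ (((2:ℕ) : ℂ)⁻¹)) ^ 2 := by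
        rw [sqVal, h2]; ring
    _ = (n : ℂ) - (V : ℂ) ^ 2 := this

/-- Φₙ⁽±⁾ = (eₙ, αₙ⁽±⁾ eₙ₋₁) are eigenvectors of H(V) with eigenvalues ±√(n−V²),
and they are linearly independent. -/
theorem stmt_8 (n : ℕ) (hn : 1 ≤ n) (V : ℝ) (hV : V ^ 2 ≠ (n : ℝ)) :
    Hgraphene V (eVec n, alphaP n V • eVec (n - 1)) =
      sqVal n V • (eVec n, alphaP n V • eVec (n - 1)) ∧
    Hgraphene V (eVec n, alphaM n V • eVec (n - 1)) =
      (-sqVal n V) • (eVec n, alphaM n V • eVec (n - 1)) ∧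
    LinearIndependent ℂ
      ![(eVec n, alphaP n V • eVec (n - 1)), (eVec n, alphaM n V • eVec (n - 1))] := by
  set s := sqVal n V with hs
  set r := (Real.sqrt n : ℂ) with hr
  have hs2 : s * s = (n : ℂ) - (V : ℂ) ^ 2 := sqVal_sq n V hV
  have hnpos : (0:ℝ) < (n:ℝ) := by exact_mod_cast Nat.lt_of_lt_of_le Nat.zero_lt_one hn
  have hr2 : r * r = (n : ℂ) := by
    rw [hr, ← Complex.ofReal_mul, Real.mul_self_sqrt (le_of_lt hnpos)]
    norm_cast
  have hr0 : r ≠ 0 := by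
    rw [hr]
    exact Complex.ofReal_ne_zero.mpr (Real.sqrt_ne_zero'.mpr hnpos)
  have hs0 : s ≠ 0 := by
    intro h
    rw [h, mul_zero] at hs2
    apply hV
    have : (V:ℂ)^2 = (n:ℂ) := by linear_combination hs2
    exact_mod_cast this
  -- helper facts
  have hn0 : n ≠ 0 := by omega
  refine ⟨?_, ?_, ?_⟩
  · -- plus eigenvector
    ext m
    · simp only [Hgraphene, creOp, eVec, Prod.smul_fst, Pi.smul_apply, smul_eq_mul]
      by_cases hm : m = n
      · subst hm
        simp only [if_pos rfl, if_neg hn0, Pi.smul_apply, eVec, if_pos rfl, smul_eq_mul]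
        rw [alphaP, ← hs, ← hr]
        field_simp
        linear_combination (Complex.I * (V:ℂ) - s) * Complex.I_sq
      · simp only [if_neg hm]
        by_cases hm0 : m = 0
        · simp [hm0, hn0]
        · simp only [if_neg hm0, Pi.smul_apply, eVec, smul_eq_mul]
          rw [if_neg (by omega)]
          ring
    · simp only [Hgraphene, annOp, eVec, Prod.smul_snd, Pi.smul_apply, smul_eq_mul]
      by_cases hm : m = n - 1
      · subst hm
        rw [if_pos (by omega), if_pos rfl]
        have hcast : ((n - 1 : ℕ) : ℝ) + 1 = (n : ℝ) := by
          push_cast [Nat.cast_sub hn]; ring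
        rw [hcast, ← hr, alphaP, ← hs]
        field_simp
        rw [← hr]; field_simp
        linear_combination hs2 - hr2 - (V:ℂ)^2 * Complex.I_sq
      · rw [if_neg (by omega), if_neg hm]
        ring
  · -- minus eigenvector
    ext m
    · simp only [Hgraphene, creOp, eVec, Prod.smul_fst, Pi.smul_apply, smul_eq_mul]
      by_cases hm : m = n
      · subst hm
        simp only [if_pos rfl, if_neg hn0, Pi.smul_apply, eVec, if_pos rfl, smul_eq_mul]
        rw [alphaM, ← hs, ← hr]
        field_simp
        linear_combination (s + Complex.I * (V:ℂ)) * Complex.I_sq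
      · simp only [if_neg hm]
        by_cases hm0 : m = 0
        · simp [hm0, hn0]
        · simp only [if_neg hm0, Pi.smul_apply, eVec, smul_eq_mul]
          rw [if_neg (by omega)]
          ring
    · simp only [Hgraphene, annOp, eVec, Prod.smul_snd, Pi.smul_apply, smul_eq_mul]
      by_cases hm : m = n - 1
      · subst hm
        rw [if_pos (by omega), if_pos rfl]
        have hcast : ((n - 1 : ℕ) : ℝ) + 1 = (n : ℝ) := by
          push_cast [Nat.cast_sub hn]; ring
        rw [hcast, ← hr, alphaM, ← hs]
        field_simp
        rw [← hr]; field_simp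
        linear_combination hs2 - hr2 - (V:ℂ)^2 * Complex.I_sq
      · rw [if_neg (by omega), if_neg hm]
        ring
  · -- linear independence
    rw [LinearIndependent.pair_iff]
    intro a b hab
    have h1 := congrArg (fun p => p.1 n) hab
    have h2 := congrArg (fun p => p.2 (n - 1)) hab
    simp only [Prod.smul_fst, Prod.smul_snd, Prod.fst_add, Prod.snd_add, Pi.add_apply,
      Pi.smul_apply, smul_eq_mul, eVec, if_pos rfl, if_true, eq_self_iff_true,
      Prod.fst_zero, Prod.snd_zero, Pi.zero_apply, mul_one] at h1 h2
    -- h1 : a + b = 0 ; h2 : a * αP + b * αM = 0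
    have hdiff : alphaP n V - alphaM n V = -2 * Complex.I * s / r := by
      rw [alphaP, alphaM, ← hs, ← hr]
      field_simp
      ring
    have hdne : alphaP n V - alphaM n V ≠ 0 := by
      rw [hdiff]
      simp only [ne_eq, div_eq_zero_iff, hr0, or_false]
      intro h
      rcases mul_eq_zero.mp h with h' | h'
      · rcases mul_eq_zero.mp h' with h'' | h''
        · norm_num at h''
        · exact Complex.I_ne_zero h''
      · exact hs0 h'
    have hb : b = -a := by linear_combination h1
    have ha : a = 0 := by
      have : a * (alphaP n V - alphaM n V) = 0 := by
        rw [hb] at h2; linear_combination h2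
      rcases mul_eq_zero.mp this with h | h
      · exact h
      · exact absurd h hdne
    exact ⟨ha, by rw [hb, ha, neg_zero]⟩
end

section
/- For n < V² (PT-broken regime, √(n−V²) = i√(V²−n) pure imaginary), one has 1 + conj(αₙ⁽±⁾)·βₙ⁽±⁾ = 0 while 1 + conj(αₙ⁽⁺⁾)·βₙ⁽⁻⁾ ≠ 0, i.e. the biorthogonality pairing of eigenvectors of H(V) and H(V)† is swapped compared with the PT-symmetric regime. -/
open Complex

/-- αₙ⁽⁺⁾ in the PT-broken regime, with √(n−V²) = i√(V²−n). -/
noncomputable def aP (n : ℕ) (V : ℝ) : ℂ :=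
  -Complex.I * (Complex.I * (Real.sqrt (V ^ 2 - (n : ℝ)) : ℂ) - Complex.I * V)
    / (Real.sqrt n : ℂ)

noncomputable def aM (n : ℕ) (V : ℝ) : ℂ :=
  Complex.I * (Complex.I * (Real.sqrt (V ^ 2 - (n : ℝ)) : ℂ) + Complex.I * V)
    / (Real.sqrt n : ℂ)

noncomputable def bP (n : ℕ) (V : ℝ) : ℂ :=
  -Complex.I * (Complex.I * (Real.sqrt (V ^ 2 - (n : ℝ)) : ℂ) + Complex.I * V)
    / (Real.sqrt n : ℂ)

noncomputable def bM (n : ℕ) (V : ℝ) : ℂ :=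
  Complex.I * (Complex.I * (Real.sqrt (V ^ 2 - (n : ℝ)) : ℂ) - Complex.I * V)
    / (Real.sqrt n : ℂ)

lemma aP_eq (n : ℕ) (V : ℝ) :
    aP n V = (((Real.sqrt (V ^ 2 - (n : ℝ)) - V) / Real.sqrt n : ℝ) : ℂ) := by
  unfold aP; push_cast; field_simp; ring_nf; simp [Complex.I_sq]; try ring

lemma aM_eq (n : ℕ) (V : ℝ) :
    aM n V = ((-(Real.sqrt (V ^ 2 - (n : ℝ)) + V) / Real.sqrt n : ℝ) : ℂ) := by
  unfold aM; push_cast; field_simp; ring_nf; simp [Complex.I_sq]; try ring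

lemma bP_eq (n : ℕ) (V : ℝ) :
    bP n V = (((Real.sqrt (V ^ 2 - (n : ℝ)) + V) / Real.sqrt n : ℝ) : ℂ) := by
  unfold bP; push_cast; field_simp; ring_nf; simp [Complex.I_sq]; try ring

lemma bM_eq (n : ℕ) (V : ℝ) :
    bM n V = ((-(Real.sqrt (V ^ 2 - (n : ℝ)) - V) / Real.sqrt n : ℝ) : ℂ) := by
  unfold bM; push_cast; field_simp; ring_nf; simp [Complex.I_sq]; try ring

/-- In the PT-broken regime n < V², 1 + conj(αₙ⁽±⁾)·βₙ⁽±⁾ = 0 while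
1 + conj(αₙ⁽⁺⁾)·βₙ⁽⁻⁾ ≠ 0: the biorthogonality pairing is swapped. -/
theorem stmt_10 (n : ℕ) (hn : 1 ≤ n) (V : ℝ) (h : (n : ℝ) < V ^ 2) :
    starRingEnd ℂ (aP n V) * bP n V = -1 ∧
    starRingEnd ℂ (aM n V) * bM n V = -1 ∧
    starRingEnd ℂ (aP n V) * bM n V ≠ -1 := by
  have hn0 : (0:ℝ) < (n:ℝ) := by exact_mod_cast Nat.pos_of_ne_zero (by omega)
  set s := Real.sqrt (V ^ 2 - (n : ℝ)) with hs
  set t := Real.sqrt (n : ℝ) with ht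
  have hsub : (0:ℝ) < V ^ 2 - n := by linarith
  have hs2 : s ^ 2 = V ^ 2 - n := Real.sq_sqrt hsub.le
  have hspos : 0 < s := Real.sqrt_pos.mpr hsub
  have ht2 : t ^ 2 = (n:ℝ) := Real.sq_sqrt hn0.le
  have htpos : 0 < t := Real.sqrt_pos.mpr hn0
  have ht0 : t ≠ 0 := ne_of_gt htpos
  rw [aP_eq, aM_eq, bP_eq, bM_eq, Complex.conj_ofReal, Complex.conj_ofReal]
  refine ⟨?_, ?_, ?_⟩
  · rw [← Complex.ofReal_mul]
    norm_cast
    field_simp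
    push_cast [Int.cast_negSucc]
    nlinarith [hs2, ht2, Real.sq_sqrt hsub.le, Real.sq_sqrt hn0.le]
  · rw [← Complex.ofReal_mul]
    norm_cast
    field_simp
    push_cast [Int.cast_negSucc]
    nlinarith [hs2, ht2, Real.sq_sqrt hsub.le, Real.sq_sqrt hn0.le]
  · rw [← Complex.ofReal_mul]
    intro hc
    have hre : ((s - V) / t) * (-(s - V) / t) = -1 := by
      exact_mod_cast hc
    have h1 : (s - V) ^ 2 = (n:ℝ) := by
      field_simp at hre
      nlinarith [hre, ht2]
    -- (s-V)^2 = n and (V-s)(V+s) = n with s > 0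
    have h2 : (V - s) * (V + s) = (n:ℝ) := by nlinarith [hs2]
    nlinarith [hspos, h1, h2, sq_nonneg (V - s), sq_nonneg (V + s)]
end

section
/- In the setting of a biorthogonal pair of bases (φₖ), (ψₖ) of ℂ^{N+1} with H φₖ = Eₖ φₖ, Eₖ real and distinct, the positive operators S_φ = Σ|φₖ⟩⟨φₖ| and S_ψ = Σ|ψₖ⟩⟨ψₖ| satisfy S_ψ = S_φ⁻¹ and the intertwining relations S_ψ H = H† S_ψ and S_φ H† = H S_φ. -/
/-- In the biorthogonal setting, S_φ = Σ|φₖ⟩⟨φₖ| and S_ψ = Σ|ψₖ⟩⟨ψₖ| are mutually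
inverse and satisfy the intertwining relations S_ψ H = H† S_ψ and S_φ H† = H S_φ. -/
theorem stmt_18 (N : ℕ)
    (H : EuclideanSpace ℂ (Fin (N + 1)) →ₗ[ℂ] EuclideanSpace ℂ (Fin (N + 1)))
    (E : Fin (N + 1) → ℝ) (hE : Function.Injective E)
    (φ ψ : Fin (N + 1) → EuclideanSpace ℂ (Fin (N + 1)))
    (hspan : Submodule.span ℂ (Set.range φ) = ⊤)
    (heig : ∀ k, H (φ k) = (E k : ℂ) • φ k)
    (hbi : ∀ k l, (inner ℂ (φ k) (ψ l) : ℂ) = if k = l then 1 else 0) :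
    (∑ k, (innerₛₗ ℂ (φ k)).smulRight (φ k)) ∘ₗ
        (∑ k, (innerₛₗ ℂ (ψ k)).smulRight (ψ k)) = LinearMap.id ∧
    (∑ k, (innerₛₗ ℂ (ψ k)).smulRight (ψ k)) ∘ₗ
        (∑ k, (innerₛₗ ℂ (φ k)).smulRight (φ k)) = LinearMap.id ∧
    (∑ k, (innerₛₗ ℂ (ψ k)).smulRight (ψ k)) ∘ₗ H =
      LinearMap.adjoint H ∘ₗ (∑ k, (innerₛₗ ℂ (ψ k)).smulRight (ψ k)) ∧
    (∑ k, (innerₛₗ ℂ (φ k)).smulRight (φ k)) ∘ₗ LinearMap.adjoint H =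
      H ∘ₗ (∑ k, (innerₛₗ ℂ (φ k)).smulRight (φ k)) := by
  set Sφ := (∑ k, (innerₛₗ ℂ (φ k)).smulRight (φ k)) with hSφ
  set Sψ := (∑ k, (innerₛₗ ℂ (ψ k)).smulRight (ψ k)) with hSψ
  have hbi' : ∀ k l, (inner ℂ (ψ k) (φ l) : ℂ) = if k = l then 1 else 0 := by
    intro k l
    rw [← inner_conj_symm, hbi]
    rcases eq_or_ne k l with rfl | h
    · simp
    · simp [h, h.symm]
  -- S_ψ (φ l) = ψ l and S_φ (ψ l) = φ l
  have hSψφ : ∀ l, Sψ (φ l) = ψ l := by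
    intro l
    simp [hSψ, LinearMap.sum_apply, hbi', ite_smul]
  have hSφψ : ∀ l, Sφ (ψ l) = φ l := by
    intro l
    simp [hSφ, LinearMap.sum_apply, hbi, ite_smul]
  have h1 : Sφ ∘ₗ Sψ = LinearMap.id := by
    apply LinearMap.ext_on hspan
    rintro x ⟨l, rfl⟩
    simp [hSψφ, hSφψ]
  have h2 : Sψ ∘ₗ Sφ = LinearMap.id := by
    have := mul_eq_one_comm.mp (show Sφ * Sψ = 1 from h1)
    exact this
  -- vectors agreeing against all φ l are equal
  have hext : ∀ u v : EuclideanSpace ℂ (Fin (N + 1)),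
      (∀ l, (inner ℂ (φ l) u : ℂ) = inner ℂ (φ l) v) → u = v := by
    intro u v huv
    have hmem : u - v ∈ (Submodule.span ℂ (Set.range φ))ᗮ := by
      rw [Submodule.mem_orthogonal]
      intro w hw
      induction hw using Submodule.span_induction with
      | mem w hw =>
        obtain ⟨l, rfl⟩ := hw
        rw [inner_sub_right, huv l, sub_self]
      | zero => simp
      | add a b _ _ ha hb => rw [inner_add_left, ha, hb, add_zero]
      | smul c a _ ha => rw [inner_smul_left, ha, mul_zero]
    rw [hspan, Submodule.top_orthogonal_eq_bot, Submodule.mem_bot, sub_eq_zero] at hmem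
    exact hmem
  have hadj : ∀ k, LinearMap.adjoint H (ψ k) = (E k : ℂ) • ψ k := by
    intro k
    apply hext
    intro l
    rw [LinearMap.adjoint_inner_right, heig, inner_smul_left, inner_smul_right]
    simp only [hbi, Complex.conj_ofReal]
    by_cases h : l = k <;> simp [h]
  have h3 : Sψ ∘ₗ H = LinearMap.adjoint H ∘ₗ Sψ := by
    refine LinearMap.ext fun x => ?_
    simp only [LinearMap.comp_apply, hSψ, LinearMap.sum_apply, LinearMap.smulRight_apply,
      innerₛₗ_apply_apply, map_sum, map_smul, hadj]
    refine Finset.sum_congr rfl fun k _ => ?_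
    rw [← LinearMap.adjoint_inner_left H, hadj, inner_smul_left, Complex.conj_ofReal, mul_comm, ← smul_smul]
  have h4 : Sφ ∘ₗ LinearMap.adjoint H = H ∘ₗ Sφ := by
    refine LinearMap.ext fun x => ?_
    simp only [LinearMap.comp_apply, hSφ, LinearMap.sum_apply, LinearMap.smulRight_apply,
      innerₛₗ_apply_apply, map_sum, map_smul, heig]
    refine Finset.sum_congr rfl fun k _ => ?_
    rw [LinearMap.adjoint_inner_right, heig, inner_smul_left, Complex.conj_ofReal, smul_smul,
      mul_comm]
  exact ⟨h1, h2, h3, h4⟩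
end
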